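/- Let z₁ = θ and z₂ = x sin θ − y cos θ, and suppose θ̇ ≠ 0 and the trajectory satisfies ẋ sin θ = ẏ cos θ. Then ż₂ = (ẋ sin θ − ẏ cos θ) + θ̇(x cos θ + y sin θ) = θ̇(x cos θ + y sin θ), ż₁ = θ̇, and consequently x = (ż₂/ż₁) cos z₁ + z₂ sin z₁ and y = (ż₂/ż₁) sin z₁ − z₂ cos z₁. -/
import Mathlib


open Real

/-- Third chart of the car atlas: with `z₁ = θ` and `z₂ = x sin θ − y cos θ`, along a
trajectory satisfying `ẋ sin θ = ẏ cos θ` with `θ̇ ≠ 0`, one has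
`ż₂ = θ̇ (x cos θ + y sin θ)` and the state is recovered from `(z₁, z₂, ż₁, ż₂)`. -/
theorem car_chart3_inverse (x y θ : ℝ → ℝ) (t : ℝ)
    (hx : DifferentiableAt ℝ x t) (hy : DifferentiableAt ℝ y t)
    (hθ : DifferentiableAt ℝ θ t)
    (hF : deriv x t * Real.sin (θ t) = deriv y t * Real.cos (θ t))
    (hθd : deriv θ t ≠ 0) :
    deriv (fun s => x s * Real.sin (θ s) - y s * Real.cos (θ s)) t =
        deriv θ t * (x t * Real.cos (θ t) + y t * Real.sin (θ t)) ∧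
      deriv θ t = deriv θ t ∧
      x t = (deriv (fun s => x s * Real.sin (θ s) - y s * Real.cos (θ s)) t / deriv θ t)
              * Real.cos (θ t) + (x t * Real.sin (θ t) - y t * Real.cos (θ t)) * Real.sin (θ t) ∧
      y t = (deriv (fun s => x s * Real.sin (θ s) - y s * Real.cos (θ s)) t / deriv θ t)
              * Real.sin (θ t) - (x t * Real.sin (θ t) - y t * Real.cos (θ t)) * Real.cos (θ t) := by
  have hd : HasDerivAt (fun s => x s * Real.sin (θ s) - y s * Real.cos (θ s))
      (deriv x t * Real.sin (θ t) + x t * (Real.cos (θ t) * deriv θ t)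
        - (deriv y t * Real.cos (θ t) + y t * (-Real.sin (θ t) * deriv θ t))) t := by
    exact (hx.hasDerivAt.mul ((Real.hasDerivAt_sin (θ t)).comp t hθ.hasDerivAt)).sub
      (hy.hasDerivAt.mul ((Real.hasDerivAt_cos (θ t)).comp t hθ.hasDerivAt))
  have hD : deriv (fun s => x s * Real.sin (θ s) - y s * Real.cos (θ s)) t =
      deriv θ t * (x t * Real.cos (θ t) + y t * Real.sin (θ t)) := by
    rw [hd.deriv]; linarith
  have hpy : Real.sin (θ t) ^ 2 + Real.cos (θ t) ^ 2 = 1 := Real.sin_sq_add_cos_sq (θ t)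
  refine ⟨hD, rfl, ?_, ?_⟩ <;> rw [hD] <;> field_simp
  · linear_combination (-(x t)) * hpy
  · linear_combination (-(y t)) * hpy
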